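/- Let $x_1,\dots,x_N$ and $y_1,\dots,y_N$ be finite sequences in $[0,1)$, and let $\epsilon_1,\dots,\epsilon_N$ be nonnegative numbers with $|x_n - y_n| \le \epsilon_n$ for all $1 \le n \le N$. Then for any $\epsilon \ge 0$, $|D_N(x_1,\dots,x_N) - D_N(y_1,\dots,y_N)| \le 2\epsilon + \overline{N}(\epsilon)/N$, where $\overline{N}(\epsilon)$ is the number of indices $n$ with $\epsilon_n > \epsilon$. -/

import Mathlib

open scoped Classical
open Filter

noncomputable section

/-- `A_N([α,β), x)`: the number of indices `n < N` with `x n ∈ [α,β)`. -/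
def countIn (N : ℕ) (x : ℕ → ℝ) (a b : ℝ) : ℕ :=
  ((Finset.range N).filter (fun n => x n ∈ Set.Ico a b)).card

/-- The discrepancy `D_N` of the finite sequence `x 0, …, x (N-1)`. -/
def disc (N : ℕ) (x : ℕ → ℝ) : ℝ :=
  ⨆ p : {p : ℝ × ℝ // 0 ≤ p.1 ∧ p.1 ≤ p.2 ∧ p.2 ≤ 1},
    |(countIn N x p.1.1 p.1.2 : ℝ) / N - (p.1.2 - p.1.1)|

lemma countIn_le_N (N : ℕ) (x : ℕ → ℝ) (a b : ℝ) : countIn N x a b ≤ N := by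
  simpa [countIn] using Finset.card_filter_le (Finset.range N) (fun n => x n ∈ Set.Ico a b)

lemma key_count (N : ℕ) (x y e : ℕ → ℝ) (ε : ℝ) (hε : 0 ≤ ε)
    (hy : ∀ n < N, y n ∈ Set.Ico (0:ℝ) 1)
    (hxy : ∀ n < N, |x n - y n| ≤ e n) (a b : ℝ) :
    countIn N x a b ≤ countIn N y (max (a-ε) 0) (min (b+ε) 1)
      + ((Finset.range N).filter (fun n => ε < e n)).card := by
  unfold countIn
  refine le_trans (Finset.card_le_card ?_) (Finset.card_union_le _ _)
  intro n hn
  simp only [Finset.mem_filter, Finset.mem_range, Finset.mem_union, Set.mem_Ico] at hn ⊢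
  obtain ⟨hnN, hax, hxb⟩ := hn
  by_cases hne : ε < e n
  · exact Or.inr ⟨hnN, hne⟩
  · left
    have h1 := hxy n hnN
    have h2 := hy n hnN
    simp only [Set.mem_Ico] at h2
    have h3 : |x n - y n| ≤ ε := h1.trans (not_lt.mp hne)
    rw [abs_le] at h3
    exact ⟨hnN, max_le (by linarith) h2.1, lt_min (by linarith) h2.2⟩

lemma disc_bdd (N : ℕ) (x : ℕ → ℝ) :
    BddAbove (Set.range fun p : {p : ℝ × ℝ // 0 ≤ p.1 ∧ p.1 ≤ p.2 ∧ p.2 ≤ 1} =>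
      |(countIn N x p.1.1 p.1.2 : ℝ) / N - (p.1.2 - p.1.1)|) := by
  refine ⟨2, ?_⟩
  rintro r ⟨⟨⟨a, b⟩, h0, hab, h1⟩, rfl⟩
  have h : (countIn N x a b : ℝ) / N ≤ 1 := by
    rcases Nat.eq_zero_or_pos N with h | h
    · simp [h]
    · rw [div_le_one (by positivity)]
      exact_mod_cast countIn_le_N N x a b
  have h2 : 0 ≤ (countIn N x a b : ℝ) / N := by positivity
  simp only
  rw [abs_le]
  constructor <;> linarith

lemma term_le_disc (N : ℕ) (x : ℕ → ℝ) (a b : ℝ) (h : 0 ≤ a ∧ a ≤ b ∧ b ≤ 1) :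
    |(countIn N x a b : ℝ) / N - (b - a)| ≤ disc N x :=
  le_ciSup (disc_bdd N x) ⟨(a, b), h⟩

lemma disc_nonneg (N : ℕ) (x : ℕ → ℝ) : 0 ≤ disc N x :=
  (abs_nonneg _).trans (term_le_disc N x 0 1 ⟨le_refl 0, zero_le_one, le_refl 1⟩)

lemma disc_le_aux (N : ℕ) (hN : 0 < N) (x y : ℕ → ℝ)
    (hx : ∀ n < N, x n ∈ Set.Ico (0 : ℝ) 1) (hy : ∀ n < N, y n ∈ Set.Ico (0 : ℝ) 1)
    (e : ℕ → ℝ) (hxy : ∀ n < N, |x n - y n| ≤ e n)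
    (ε : ℝ) (hε : 0 ≤ ε) :
    disc N x ≤ disc N y +
      (2 * ε + (((Finset.range N).filter (fun n => ε < e n)).card : ℝ) / N) := by
  set M : ℝ := (((Finset.range N).filter (fun n => ε < e n)).card : ℝ) with hM
  have hM0 : 0 ≤ M := by positivity
  have hNpos : (0:ℝ) < N := by exact_mod_cast hN
  haveI : Nonempty {p : ℝ × ℝ // 0 ≤ p.1 ∧ p.1 ≤ p.2 ∧ p.2 ≤ 1} := ⟨⟨(0,1), by norm_num⟩⟩
  apply ciSup_le
  rintro ⟨⟨a, b⟩, h0, hab, h1⟩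
  simp only
  rw [abs_sub_le_iff]
  constructor
  · -- upper bound via enlarged interval
    have hkey := key_count N x y e ε hε hy hxy a b
    have ha' : max (a - ε) 0 ≤ min (b + ε) 1 :=
      le_trans (max_le (by linarith) h0) (le_min (by linarith) (by linarith))
    have hterm := term_le_disc N y (max (a - ε) 0) (min (b + ε) 1)
      ⟨le_max_right _ _, ha', min_le_right _ _⟩
    have hcast : (countIn N x a b : ℝ) ≤
        (countIn N y (max (a - ε) 0) (min (b + ε) 1) : ℝ) + M := by
      rw [hM]; exact_mod_cast hkey
    have hdiv : (countIn N x a b : ℝ) / N ≤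
        (countIn N y (max (a - ε) 0) (min (b + ε) 1) : ℝ) / N + M / N := by
      rw [← add_div]
      exact (div_le_div_iff_of_pos_right hNpos).mpr hcast
    have hb' : min (b + ε) 1 - max (a - ε) 0 ≤ (b - a) + 2 * ε := by
      have h5 := min_le_left (b + ε) 1
      have h6 := le_max_left (a - ε) 0
      linarith
    have h7 := (le_abs_self _).trans hterm
    linarith
  · -- lower bound via shrunk interval
    by_cases hc : b - a ≤ 2 * ε
    · have hA : 0 ≤ (countIn N x a b : ℝ) / N := by positivity
      have hd := disc_nonneg N y
      have hMN : 0 ≤ M / N := by positivity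
      linarith
    · push_neg at hc
      have hkey := key_count N y x e ε hε hx
        (fun n hn => (abs_sub_comm (y n) (x n)) ▸ hxy n hn) (a + ε) (b - ε)
      have e1 : max (a + ε - ε) 0 = a := by
        have : a + ε - ε = a := by ring
        rw [this, max_eq_left h0]
      have e2 : min (b - ε + ε) 1 = b := by
        have : b - ε + ε = b := by ring
        rw [this, min_eq_left h1]
      rw [e1, e2] at hkey
      have hterm := term_le_disc N y (a + ε) (b - ε)
        ⟨by linarith, by linarith, by linarith⟩
      have habs := abs_le.mp hterm
      have hcast : (countIn N y (a + ε) (b - ε) : ℝ) ≤ (countIn N x a b : ℝ) + M := by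
        rw [hM]; exact_mod_cast hkey
      have hdiv : (countIn N y (a + ε) (b - ε) : ℝ) / N ≤
          (countIn N x a b : ℝ) / N + M / N := by
        rw [← add_div]
        exact (div_le_div_iff_of_pos_right hNpos).mpr hcast
      linarith [habs.1]

theorem disc_diff_le (N : ℕ) (hN : 0 < N) (x y : ℕ → ℝ)
    (hx : ∀ n < N, x n ∈ Set.Ico (0 : ℝ) 1) (hy : ∀ n < N, y n ∈ Set.Ico (0 : ℝ) 1)
    (e : ℕ → ℝ) (he : ∀ n < N, 0 ≤ e n) (hxy : ∀ n < N, |x n - y n| ≤ e n)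
    (ε : ℝ) (hε : 0 ≤ ε) :
    |disc N x - disc N y| ≤
      2 * ε + (((Finset.range N).filter (fun n => ε < e n)).card : ℝ) / N := by
  rw [abs_sub_le_iff]
  constructor
  · have := disc_le_aux N hN x y hx hy e hxy ε hε
    linarith
  · have := disc_le_aux N hN y x hy hx e
      (fun n hn => (abs_sub_comm (y n) (x n)) ▸ hxy n hn) ε hε
    linarith
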